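/- (Two-point logarithmic Sobolev inequality, Bonami–Gross) Let f : {0,1} → ℝ and let μ = (1/2)(δ₀ + δ₁) be the uniform measure on {0,1}. Then Ent_μ(f²) ≤ (1/2)·|f(0) − f(1)|². -/

import Mathlib

open Real

/-- The entropy of a nonnegative function `g : {0,1} → ℝ` with respect to the uniform
measure `μ = (1/2)(δ₀ + δ₁)`: `Ent_μ(g) = E_μ[g log g] − E_μ[g] log E_μ[g]`, where
`E_μ[g] = (g 0 + g 1)/2` (with the convention `0 · log 0 = 0`, automatic since
`Real.log 0 = 0`). -/
noncomputable def entTwoPoint (g : Fin 2 → ℝ) : ℝ :=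
  (g 0 * Real.log (g 0) + g 1 * Real.log (g 1)) / 2
    - ((g 0 + g 1) / 2) * Real.log ((g 0 + g 1) / 2)

/-- `log 2 - 1 + r ≤ log (1 + r²)` for `r ∈ [0,1]`. -/
lemma logA (r : ℝ) (h0 : 0 ≤ r) (h1 : r ≤ 1) :
    Real.log 2 - 1 + r ≤ Real.log (1 + r ^ 2) := by
  set φ : ℝ → ℝ := fun x => 1 - x + Real.log (1 + x ^ 2) with hφ
  have hder : ∀ x : ℝ, HasDerivAt φ (-1 + 2 * x / (1 + x ^ 2)) x := by
    intro x
    have hpos : (0 : ℝ) < 1 + x ^ 2 := by positivity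
    have h1 : HasDerivAt (fun x : ℝ => 1 - x) (-1) x := by
      simpa using (hasDerivAt_id x).const_sub 1
    have h2 : HasDerivAt (fun x : ℝ => 1 + x ^ 2) (2 * x) x := by
      simpa using ((hasDerivAt_pow 2 x).const_add 1)
    have h3 : HasDerivAt (fun x : ℝ => Real.log (1 + x ^ 2)) (2 * x / (1 + x ^ 2)) x := by
      simpa using (h2.log (ne_of_gt hpos))
    exact h1.add h3
  have hanti : AntitoneOn φ (Set.Icc (0 : ℝ) 1) := by
    apply antitoneOn_of_hasDerivWithinAt_nonpos (convex_Icc 0 1)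
      (f' := fun x => -1 + 2 * x / (1 + x ^ 2))
    · exact fun x _ => (hder x).continuousAt.continuousWithinAt
    · exact fun x _ => (hder x).hasDerivWithinAt
    · intro x hx
      rw [interior_Icc] at hx
      have hpos : (0 : ℝ) < 1 + x ^ 2 := by positivity
      have h2 : 2 * x / (1 + x ^ 2) ≤ 1 := by
        rw [div_le_one hpos]; nlinarith [sq_nonneg (1 - x)]
      linarith
  have h := hanti (Set.mem_Icc.2 ⟨h0, h1⟩) (Set.mem_Icc.2 ⟨le_refl 0 |>.trans zero_le_one, le_refl 1⟩) h1
  simp only [hφ] at h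
  have : Real.log (1 + 1 ^ 2) = Real.log 2 := by norm_num
  linarith [h, this.le]

/-- For `0 < b ≤ a`, `a · log (2a²/(a²+b²)) ≤ a − b`. -/
lemma logB (a b : ℝ) (hb : 0 < b) (hba : b ≤ a) :
    a * Real.log (2 * a ^ 2 / (a ^ 2 + b ^ 2)) ≤ a - b := by
  have ha : 0 < a := hb.trans_le hba
  set r := b / a with hr
  have hr0 : 0 ≤ r := by positivity
  have hr1 : r ≤ 1 := by rw [hr, div_le_one ha]; exact hba
  have hrw : 2 * a ^ 2 / (a ^ 2 + b ^ 2) = 2 / (1 + r ^ 2) := by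
    rw [hr]; field_simp
  have hpos : (0 : ℝ) < 1 + r ^ 2 := by positivity
  have hlog : Real.log (2 / (1 + r ^ 2)) = Real.log 2 - Real.log (1 + r ^ 2) :=
    Real.log_div (by norm_num) (ne_of_gt hpos)
  have hA := logA r hr0 hr1
  have : Real.log (2 * a ^ 2 / (a ^ 2 + b ^ 2)) ≤ 1 - r := by
    rw [hrw, hlog]; linarith
  calc a * Real.log (2 * a ^ 2 / (a ^ 2 + b ^ 2)) ≤ a * (1 - r) := by
        exact mul_le_mul_of_nonneg_left this ha.le
    _ = a - b := by rw [hr]; field_simp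

/-- Key two-point inequality for `0 < b ≤ a`. -/
lemma keyC (a b : ℝ) (hb : 0 < b) (hba : b ≤ a) :
    a ^ 2 * Real.log (a ^ 2) + b ^ 2 * Real.log (b ^ 2)
      - (a ^ 2 + b ^ 2) * Real.log ((a ^ 2 + b ^ 2) / 2) ≤ (a - b) ^ 2 := by
  set F : ℝ → ℝ := fun x => (x - b) ^ 2 - x ^ 2 * Real.log (x ^ 2)
      + (x ^ 2 + b ^ 2) * Real.log ((x ^ 2 + b ^ 2) / 2) - b ^ 2 * Real.log (b ^ 2) with hF
  have hder : ∀ x : ℝ, 0 < x →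
      HasDerivAt F (2 * (x - b) - 2 * x * Real.log (2 * x ^ 2 / (x ^ 2 + b ^ 2))) x := by
    intro x hx
    have hx2 : (0 : ℝ) < x ^ 2 := by positivity
    have hu : (0 : ℝ) < x ^ 2 + b ^ 2 := by positivity
    have d1 : HasDerivAt (fun y : ℝ => (y - b) ^ 2) (2 * (x - b)) x := by
      simpa using ((hasDerivAt_id x).sub_const b).fun_pow 2
    have dsq : HasDerivAt (fun y : ℝ => y ^ 2) (2 * x) x := by
      simpa using hasDerivAt_pow 2 x
    have dlogsq : HasDerivAt (fun y : ℝ => Real.log (y ^ 2)) (2 * x / x ^ 2) x := by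
      simpa using dsq.log (ne_of_gt hx2)
    have d2 : HasDerivAt (fun y : ℝ => y ^ 2 * Real.log (y ^ 2))
        (2 * x * Real.log (x ^ 2) + x ^ 2 * (2 * x / x ^ 2)) x := dsq.mul dlogsq
    have du : HasDerivAt (fun y : ℝ => y ^ 2 + b ^ 2) (2 * x) x := dsq.add_const _
    have du2 : HasDerivAt (fun y : ℝ => (y ^ 2 + b ^ 2) / 2) (x) x := by
      simpa using du.div_const 2
    have dlogu : HasDerivAt (fun y : ℝ => Real.log ((y ^ 2 + b ^ 2) / 2))
        (x / ((x ^ 2 + b ^ 2) / 2)) x := du2.log (by positivity)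
    have d3 : HasDerivAt (fun y : ℝ => (y ^ 2 + b ^ 2) * Real.log ((y ^ 2 + b ^ 2) / 2))
        (2 * x * Real.log ((x ^ 2 + b ^ 2) / 2) + (x ^ 2 + b ^ 2) * (x / ((x ^ 2 + b ^ 2) / 2))) x :=
      du.mul dlogu
    have := ((d1.fun_sub d2).fun_add d3).sub_const (b ^ 2 * Real.log (b ^ 2))
    convert this using 1
    case e'_4 => rfl
    case e'_5 => rfl
    have hlog1 : Real.log (2 * x ^ 2 / (x ^ 2 + b ^ 2))
        = Real.log 2 + Real.log (x ^ 2) - Real.log (x ^ 2 + b ^ 2) := by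
      rw [Real.log_div (by positivity) (ne_of_gt hu), Real.log_mul (by norm_num) (ne_of_gt hx2)]
    have hlog2 : Real.log ((x ^ 2 + b ^ 2) / 2)
        = Real.log (x ^ 2 + b ^ 2) - Real.log 2 := Real.log_div (ne_of_gt hu) (by norm_num)
    rw [hlog1, hlog2]
    field_simp
    ring
  have hmono : MonotoneOn F (Set.Ici b) := by
    apply monotoneOn_of_hasDerivWithinAt_nonneg (convex_Ici b)
      (f' := fun x => 2 * (x - b) - 2 * x * Real.log (2 * x ^ 2 / (x ^ 2 + b ^ 2)))
    · exact fun x hx => (hder x (hb.trans_le hx)).continuousAt.continuousWithinAt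
    · intro x hx
      rw [interior_Ici] at hx
      exact (hder x (hb.trans hx)).hasDerivWithinAt
    · intro x hx
      rw [interior_Ici] at hx
      have hxb : b ≤ x := hx.le
      have hB := logB x b hb hxb
      have hx0 : 0 < x := hb.trans hx
      nlinarith [hB]
  have hFb : F b = 0 := by
    have : (b ^ 2 + b ^ 2) / 2 = b ^ 2 := by ring
    simp only [hF, this]
    ring
  have := hmono (Set.self_mem_Ici) (Set.mem_Ici.2 hba) hba
  rw [hFb] at this
  simp only [hF] at this
  linarith

/-- Key inequality without ordering assumption. -/
lemma key2 (a b : ℝ) (ha : 0 ≤ a) (hb : 0 ≤ b) :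
    a ^ 2 * Real.log (a ^ 2) + b ^ 2 * Real.log (b ^ 2)
      - (a ^ 2 + b ^ 2) * Real.log ((a ^ 2 + b ^ 2) / 2) ≤ (a - b) ^ 2 := by
  have base : ∀ u v : ℝ, 0 ≤ v → v ≤ u →
      u ^ 2 * Real.log (u ^ 2) + v ^ 2 * Real.log (v ^ 2)
        - (u ^ 2 + v ^ 2) * Real.log ((u ^ 2 + v ^ 2) / 2) ≤ (u - v) ^ 2 := by
    intro u v hv hvu
    rcases eq_or_lt_of_le hv with h | h
    · have hv0 : v = 0 := h.symm
      subst hv0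
      simp only [ne_eq, OfNat.ofNat_ne_zero, not_false_eq_true, zero_pow, zero_mul, add_zero]
      rcases eq_or_lt_of_le (hv.trans hvu) with hu | hu
      · simp [← hu]
      · have hu2 : (0 : ℝ) < u ^ 2 := by positivity
        have : Real.log (u ^ 2 / 2) = Real.log (u ^ 2) - Real.log 2 :=
          Real.log_div (ne_of_gt hu2) (by norm_num)
        rw [this]
        have hlog2 : Real.log 2 ≤ 1 := by
          have := Real.log_le_sub_one_of_pos (by norm_num : (0:ℝ) < 2)
          linarith
        nlinarith [hu2, hlog2]
    · exact keyC u v h hvu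
  rcases le_total b a with h | h
  · exact base a b hb h
  · have := base b a ha h
    rw [show b ^ 2 + a ^ 2 = a ^ 2 + b ^ 2 from by ring] at this
    nlinarith [this]

theorem two_point_log_sobolev (f : Fin 2 → ℝ) :
    entTwoPoint (fun i => f i ^ 2) ≤ (1 / 2) * |f 0 - f 1| ^ 2 := by
  have h2 := key2 |f 0| |f 1| (abs_nonneg _) (abs_nonneg _)
  rw [sq_abs, sq_abs] at h2
  have habs : |(|f 0| - |f 1|)| ≤ |f 0 - f 1| := abs_abs_sub_abs_le_abs_sub _ _
  have hsq : (|f 0| - |f 1|) ^ 2 ≤ |f 0 - f 1| ^ 2 := by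
    rw [← sq_abs (|f 0| - |f 1|)]
    exact pow_le_pow_left₀ (abs_nonneg _) habs 2
  simp only [entTwoPoint]
  linarith
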